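/- Let n ≥ 2 and let a_0, …, a_n be pairwise relatively prime integers with a_i ≥ 2 for all i. Then exactly one of the following holds: (1) n = 2 and {a_0, a_1, a_2} = {2, 3, 5} (as a set), in which case Σ_{j=0}^{n} ∏_{i≠j} a_i = 31 > 30 = (n−1)·∏_{i=0}^n a_i; or (2) Σ_{j=0}^{n} ∏_{i≠j} a_i < (n−1)·∏_{i=0}^n a_i. In particular the canonical index I_𝐚 = (n−1)·∏ a_i − Σ_j ∏_{i≠j} a_i is negative exactly when {a_0,…,a_n} = {2,3,5} and is positive otherwise. -/

import Mathlib

lemma ne_of_gcd' (a b : ℤ) (ha : 2 ≤ a) (g : Int.gcd a b = 1) : a ≠ b := by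
  rintro rfl
  rw [Int.gcd_self] at g
  omega

lemma tri_sorted (a b c : ℤ) (ha : 2 ≤ a) (hab : a < b) (hbc : b < c)
    (gab : Int.gcd a b = 1) (gac : Int.gcd a c = 1) (gbc : Int.gcd b c = 1) :
    b*c + a*c + a*b < a*b*c ∨ (a = 2 ∧ b = 3 ∧ c = 5) := by
  by_cases ha3 : 3 ≤ a
  · left
    nlinarith [mul_pos (show (0:ℤ) < a by linarith) (show (0:ℤ) < b by linarith),
      mul_pos (show (0:ℤ) < b by linarith) (show (0:ℤ) < c by linarith),
      mul_pos (show (0:ℤ) < a by linarith) (show (0:ℤ) < c by linarith)]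
  · have ha2 : a = 2 := by omega
    subst ha2
    by_cases hb3 : b = 3
    · subst hb3
      by_cases hc5 : c = 5
      · exact Or.inr ⟨rfl, rfl, hc5⟩
      · left
        have h4 : c ≠ 4 := by rintro rfl; simp [Int.gcd] at gac
        have h6 : c ≠ 6 := by rintro rfl; simp [Int.gcd] at gac
        have : 7 ≤ c := by omega
        nlinarith
    · have hb4 : b ≠ 4 := by rintro rfl; simp [Int.gcd] at gab
      have hb5 : 5 ≤ b := by omega
      have hc6 : c ≠ 6 := by rintro rfl; simp [Int.gcd] at gac
      have hc7 : 7 ≤ c := by omega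
      left
      nlinarith

lemma tri (a b c : ℤ) (ha : 2 ≤ a) (hb : 2 ≤ b) (hc : 2 ≤ c)
    (gab : Int.gcd a b = 1) (gac : Int.gcd a c = 1) (gbc : Int.gcd b c = 1) :
    b*c + a*c + a*b < a*b*c ∨
      (({a, b, c} : Set ℤ) = {2, 3, 5} ∧ b*c + a*c + a*b = 31 ∧ a*b*c = 30) := by
  have gba : Int.gcd b a = 1 := by rwa [Int.gcd_comm]
  have gca : Int.gcd c a = 1 := by rwa [Int.gcd_comm]
  have gcb : Int.gcd c b = 1 := by rwa [Int.gcd_comm]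
  have nab := ne_of_gcd' a b ha gab
  have nac := ne_of_gcd' a c ha gac
  have nbc := ne_of_gcd' b c hb gbc
  have key : ∀ x y z : ℤ, ({x, y, z} : Set ℤ) = {a, b, c} → x < y → y < z →
      2 ≤ x → Int.gcd x y = 1 → Int.gcd x z = 1 → Int.gcd y z = 1 →
      x*y*z = a*b*c → y*z + x*z + x*y = b*c + a*c + a*b →
      (b*c + a*c + a*b < a*b*c ∨
      (({a, b, c} : Set ℤ) = {2, 3, 5} ∧ b*c + a*c + a*b = 31 ∧ a*b*c = 30)) := by
    intro x y z hset hxy hyz hx g1 g2 g3 hprod hsum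
    rcases tri_sorted x y z hx hxy hyz g1 g2 g3 with h | ⟨rfl, rfl, rfl⟩
    · left; rw [← hprod, ← hsum]; exact h
    · right
      refine ⟨by rw [← hset], by omega, by omega⟩
  rcases lt_trichotomy a b with h1 | h1 | h1
  · rcases lt_trichotomy b c with h2 | h2 | h2
    · exact key a b c rfl h1 h2 ha gab gac gbc (by ring) (by ring)
    · exact absurd h2 nbc
    · rcases lt_trichotomy a c with h3 | h3 | h3
      · exact key a c b (by ext x; simp; tauto) h3 h2 ha gac gab gcb (by ring) (by ring)
      · exact absurd h3 nac
      · exact key c a b (by ext x; simp; tauto) h3 h1 hc gca gcb gab (by ring) (by ring)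
  · exact absurd h1 nab
  · rcases lt_trichotomy a c with h2 | h2 | h2
    · exact key b a c (by ext x; simp; tauto) h1 h2 hb gba gbc gac (by ring) (by ring)
    · exact absurd h2 nac
    · rcases lt_trichotomy b c with h3 | h3 | h3
      · exact key b c a (by ext x; simp; tauto) h3 h2 hb gbc gba gca (by ring) (by ring)
      · exact absurd h3 nbc
      · exact key c b a (by ext x; simp; tauto) h3 h1 hc gcb gca gba (by ring) (by ring)

lemma big (n : ℕ) (hn : 3 ≤ n) (a : Fin (n + 1) → ℤ)
    (h2 : ∀ i, 2 ≤ a i)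
    (hcop : ∀ i j, i ≠ j → Int.gcd (a i) (a j) = 1) :
    (∑ j, ∏ i ∈ Finset.univ.erase j, a i) < ((n : ℤ) - 1) * (∏ i, a i) := by
  set P : ℤ := ∏ i, a i with hP
  have hPpos : 0 < P := Finset.prod_pos fun i _ => by linarith [h2 i]
  have cofpos : ∀ j : Fin (n+1), 0 < ∏ i ∈ Finset.univ.erase j, a i := fun j =>
    Finset.prod_pos fun i _ => by linarith [h2 i]
  have hmul : ∀ j : Fin (n+1), a j * ∏ i ∈ Finset.univ.erase j, a i = P := fun j =>
    Finset.mul_prod_erase _ _ (Finset.mem_univ j)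
  have hn' : (3 : ℤ) ≤ (n : ℤ) := by exact_mod_cast hn
  by_cases hex : ∃ j0, a j0 = 2
  · obtain ⟨j0, hj0⟩ := hex
    have hothers : ∀ j, j ≠ j0 → 3 ≤ a j := by
      intro j hj
      have g := hcop j j0 hj
      rcases eq_or_lt_of_le (h2 j) with h | h
      · rw [← h, hj0] at g; simp [Int.gcd] at g
      · omega
    have hsplit : (∑ j, ∏ i ∈ Finset.univ.erase j, a i) =
        (∏ i ∈ Finset.univ.erase j0, a i) +
          ∑ j ∈ Finset.univ.erase j0, ∏ i ∈ Finset.univ.erase j, a i :=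
      (Finset.add_sum_erase _ _ (Finset.mem_univ j0)).symm
    have h1 : 2 * ∏ i ∈ Finset.univ.erase j0, a i = P := by
      rw [← hmul j0, hj0]
    have h2' : ∀ j ∈ Finset.univ.erase j0,
        3 * (∏ i ∈ Finset.univ.erase j, a i) ≤ P := by
      intro j hj
      rw [← hmul j]
      have := hothers j (Finset.ne_of_mem_erase hj)
      nlinarith [cofpos j]
    have hS : ∑ j ∈ Finset.univ.erase j0, 3 * (∏ i ∈ Finset.univ.erase j, a i) ≤
        (n : ℤ) * P := by
      calc _ ≤ ∑ _j ∈ Finset.univ.erase j0, P := Finset.sum_le_sum h2'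
      _ = (n : ℤ) * P := by
        rw [Finset.sum_const, Finset.card_erase_of_mem (Finset.mem_univ j0)]
        simp [nsmul_eq_mul]
    rw [← Finset.mul_sum] at hS
    nlinarith [hsplit]
  · push_neg at hex
    have h3 : ∀ j : Fin (n+1), 3 ≤ a j := fun j => by
      have := h2 j; have := hex j; omega
    have hall : ∀ j ∈ (Finset.univ : Finset (Fin (n+1))),
        3 * (∏ i ∈ Finset.univ.erase j, a i) ≤ P := by
      intro j _
      rw [← hmul j]
      nlinarith [cofpos j, h3 j]
    have hS : ∑ j, 3 * (∏ i ∈ Finset.univ.erase j, a i) ≤ ((n : ℤ) + 1) * P := by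
      calc _ ≤ ∑ _j : Fin (n+1), P := Finset.sum_le_sum hall
      _ = ((n : ℤ) + 1) * P := by simp [Finset.sum_const, nsmul_eq_mul]
    rw [← Finset.mul_sum] at hS
    nlinarith

/-- For `n ≥ 2` and pairwise relatively prime integers `a i ≥ 2`, exactly one of the
following holds: either `n = 2` and `{a 0, a 1, a 2} = {2, 3, 5}` as a set, in which case
`∑ j, ∏_{i ≠ j} a i = 31 > 30 = (n-1) * ∏ a i`; or
`∑ j, ∏_{i ≠ j} a i < (n-1) * ∏ a i`. -/
theorem stmt3 (n : ℕ) (hn : 2 ≤ n) (a : Fin (n + 1) → ℤ)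
    (h2 : ∀ i, 2 ≤ a i)
    (hcop : ∀ i j, i ≠ j → Int.gcd (a i) (a j) = 1) :
    Xor'
      (n = 2 ∧ Set.range a = ({2, 3, 5} : Set ℤ) ∧
        (∑ j, ∏ i ∈ Finset.univ.erase j, a i) = 31 ∧
        ((n : ℤ) - 1) * (∏ i, a i) = 30)
      ((∑ j, ∏ i ∈ Finset.univ.erase j, a i) < ((n : ℤ) - 1) * (∏ i, a i)) := by
  rcases eq_or_lt_of_le hn with h | h
  · -- n = 2
    obtain rfl : n = 2 := h.symm
    have hsum : (∑ j, ∏ i ∈ Finset.univ.erase j, a i) =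
        a 1 * a 2 + a 0 * a 2 + a 0 * a 1 := by
      have e0 : (Finset.univ.erase (0 : Fin 3)) = {1, 2} := by decide
      have e1 : (Finset.univ.erase (1 : Fin 3)) = {0, 2} := by decide
      have e2 : (Finset.univ.erase (2 : Fin 3)) = {0, 1} := by decide
      rw [Fin.sum_univ_three, e0, e1, e2]
      simp [Finset.prod_pair]
    have hprod : (∏ i, a i) = a 0 * a 1 * a 2 := Fin.prod_univ_three a
    have hrange : Set.range a = {a 0, a 1, a 2} := by
      ext x
      constructor
      · rintro ⟨i, rfl⟩; fin_cases i <;> simp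
      · rintro (rfl | rfl | rfl) <;> exact ⟨_, rfl⟩
    have hcast : ((2 : ℕ) : ℤ) - 1 = 1 := by norm_num
    rcases tri (a 0) (a 1) (a 2) (h2 0) (h2 1) (h2 2)
        (hcop 0 1 (by decide)) (hcop 0 2 (by decide)) (hcop 1 2 (by decide)) with
      hlt | ⟨hset, h31, h30⟩
    · right
      refine ⟨by rw [hsum, hprod, hcast]; linarith, ?_⟩
      rintro ⟨-, -, hs31, hp30⟩
      rw [hsum] at hs31
      rw [hcast, hprod] at hp30
      omega
    · left
      refine ⟨⟨rfl, by rw [hrange]; exact hset, by rw [hsum]; exact h31,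
        by rw [hcast, hprod, one_mul]; exact h30⟩, ?_⟩
      intro hlt
      rw [hsum, hcast, hprod, one_mul] at hlt
      omega
  · -- n ≥ 3
    right
    refine ⟨big n h a h2 hcop, ?_⟩
    rintro ⟨rfl, -⟩
    omega
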